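/- Let λ, μ ∈ ℝ, let x : ℝ → ℝ² be three times continuously differentiable, let s ∈ ℝ with x'(s) ≠ 0, and let ν ∈ ℝ² satisfy ν · x'(s) = 0. Set Ũ_1 = λ ν x'(s)^⊤ + μ x'(s) ν^⊤, Ũ_2 = (λ+2μ) ν x'(s)^⊤ + μ x'(s) ν^⊤, Û_1 = λ ν x''(s)^⊤ + μ x''(s) ν^⊤ + μ (ν · x''(s)) I, and Û_2 = (λ+2μ) ν x''(s)^⊤ + μ x''(s) ν^⊤ + μ (ν · x''(s)) (I − 4 x'(s) x'(s)^⊤/|x'(s)|²). Then x(σ) ≠ x(s) for all σ ≠ s sufficiently close to s, and for k = 1, 2, as σ → s, U_k(x(s), x(σ))/|x(s) − x(σ)|² − Ũ_k/(|x'(s)|² (s − σ)) + Û_k/(2 |x'(s)|²) − ((x'(s) · x''(s))/|x'(s)|⁴) Ũ_k = O(s − σ) (entrywise as 2×2 matrices). -/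

import Mathlib

open Real Filter MeasureTheory

/-- Euclidean norm on ℝ² (represented as `Fin 2 → ℝ`). -/
noncomputable def nrm2 (z : Fin 2 → ℝ) : ℝ := Real.sqrt (z 0 ^ 2 + z 1 ^ 2)

/-- Euclidean inner product on ℝ². -/
noncomputable def dot2 (a b : Fin 2 → ℝ) : ℝ := a 0 * b 0 + a 1 * b 1

/-- identity matrix entries -/
noncomputable def idm (i j : Fin 2) : ℝ := if i = j then 1 else 0

/-- J(z) = z zᵀ / |z|² -/
noncomputable def Jmat (z : Fin 2 → ℝ) (i j : Fin 2) : ℝ := z i * z j / nrm2 z ^ 2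

/-- divergence of a planar vector field -/
noncomputable def divg (v : (Fin 2 → ℝ) → (Fin 2 → ℝ)) (x : Fin 2 → ℝ) : ℝ :=
  fderiv ℝ v x (Pi.single 0 1) 0 + fderiv ℝ v x (Pi.single 1 1) 1

/-- traction operator T on a planar vector field:
(Tv)(x) = λ (div v)(x) ν + 2μ ((ν·∇)v)(x) + μ (div(Qv))(x) Qν, where Q = [[0,1],[-1,0]]. -/
noncomputable def traction (lam mu : ℝ) (ν : Fin 2 → ℝ)
    (v : (Fin 2 → ℝ) → (Fin 2 → ℝ)) (x : Fin 2 → ℝ) : Fin 2 → ℝ :=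
  (lam * divg v x) • ν + (2 * mu) • fderiv ℝ v x ν
    + (mu * divg (fun y => ![v y 1, -(v y 0)]) x) • ![ν 1, -(ν 0)]

/-- traction of a 2×2 matrix-valued field, acting columnwise -/
noncomputable def tractionM (lam mu : ℝ) (ν : Fin 2 → ℝ)
    (G : (Fin 2 → ℝ) → Fin 2 → Fin 2 → ℝ) (x : Fin 2 → ℝ) (i j : Fin 2) : ℝ :=
  traction lam mu ν (fun y i' => G y i' j) x i

/-- U₁(x,y) = λ ν (x−y)ᵀ + μ (x−y) νᵀ + μ (ν·(x−y)) I -/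
noncomputable def U1mat (lam mu : ℝ) (ν x y : Fin 2 → ℝ) (i j : Fin 2) : ℝ :=
  lam * ν i * (x j - y j) + mu * (x i - y i) * ν j + mu * dot2 ν (x - y) * idm i j

/-- U₂(x,y) = (λ+2μ) ν (x−y)ᵀ + μ (x−y) νᵀ + μ (ν·(x−y)) (I − 4J(x−y)) -/
noncomputable def U2mat (lam mu : ℝ) (ν x y : Fin 2 → ℝ) (i j : Fin 2) : ℝ :=
  (lam + 2 * mu) * ν i * (x j - y j) + mu * (x i - y i) * ν j
    + mu * dot2 ν (x - y) * (idm i j - 4 * Jmat (x - y) i j)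

/-- Laguerre polynomial L_n(x) = ∑_{k=0}^n (−1)^k (n choose k) x^k / k! -/
noncomputable def lagPoly (n : ℕ) (x : ℝ) : ℝ :=
  ∑ k ∈ Finset.range (n + 1), (-1 : ℝ) ^ k * (n.choose k : ℝ) * x ^ k / (k.factorial : ℝ)

/-- U_k(x,y): U₁ for k = 1, U₂ for k = 2 -/
noncomputable def Umat (lam mu : ℝ) (ν : Fin 2 → ℝ) (k : ℕ) (x y : Fin 2 → ℝ)
    (i j : Fin 2) : ℝ :=
  if k = 1 then U1mat lam mu ν x y i j else U2mat lam mu ν x y i j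

/-- Ũ_k built from the tangent vector x'(s) -/
noncomputable def Utld (lam mu : ℝ) (ν x' : Fin 2 → ℝ) (k : ℕ) (i j : Fin 2) : ℝ :=
  (if k = 1 then lam else lam + 2 * mu) * ν i * x' j + mu * x' i * ν j

/-- Û_k built from x'(s) and x''(s) -/
noncomputable def Uhat (lam mu : ℝ) (ν x' x'' : Fin 2 → ℝ) (k : ℕ) (i j : Fin 2) : ℝ :=
  (if k = 1 then lam else lam + 2 * mu) * ν i * x'' j + mu * x'' i * ν j
    + mu * dot2 ν x'' *
        (if k = 1 then idm i j else idm i j - 4 * x' i * x' j / nrm2 x' ^ 2)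

/- ======================= auxiliary material ======================= -/

lemma sq_nrm2 (z : Fin 2 → ℝ) : nrm2 z ^ 2 = z 0 ^ 2 + z 1 ^ 2 :=
  Real.sq_sqrt (by positivity)

/-- quadratic Taylor bound for a C² function of one variable -/
lemma quad_bound {f : ℝ → ℝ} {U : Set ℝ} (hU : IsOpen U) (h0 : (0:ℝ) ∈ U)
    (hf : ContDiffOn ℝ 2 f U) :
    ∃ C > (0:ℝ), ∃ δ > (0:ℝ), ∀ t : ℝ, |t| ≤ δ → |f t - f 0 - deriv f 0 * t| ≤ C * t ^ 2 := by
  have hf' : ContDiffOn ℝ 1 (deriv f) U := hf.deriv_of_isOpen hU (by norm_num)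
  have hf'at : ContDiffAt ℝ 1 (deriv f) 0 := hf'.contDiffAt (hU.mem_nhds h0)
  obtain ⟨L, tset, htset, hlip⟩ := hf'at.exists_lipschitzOnWith
  have hmem : tset ∩ U ∈ nhds (0:ℝ) := Filter.inter_mem htset (hU.mem_nhds h0)
  obtain ⟨ε, hε, hball⟩ := Metric.mem_nhds_iff.mp hmem
  have hder : ∀ ξ ∈ U, HasDerivAt f (deriv f ξ) ξ := by
    intro ξ hξ
    exact ((hf.differentiableOn (by norm_num)).differentiableAt (hU.mem_nhds hξ)).hasDerivAt
  refine ⟨(L:ℝ) + 1, by positivity, ε/2, by positivity, fun t ht => ?_⟩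
  have hsub : Set.uIcc (0:ℝ) t ⊆ tset ∩ U := by
    intro ξ hξ
    apply hball
    rw [Metric.mem_ball, Real.dist_eq, sub_zero]
    rcases le_total 0 t with h | h
    · rw [Set.uIcc_of_le h] at hξ
      have := abs_le.mpr ⟨by linarith [hξ.1], hξ.2⟩
      calc |ξ| ≤ |t| := by rw [abs_of_nonneg h]; exact this
        _ < ε := by linarith [abs_nonneg t]
    · rw [Set.uIcc_of_ge h] at hξ
      have h2 : |ξ| ≤ |t| := by
        rw [abs_of_nonpos hξ.2, abs_of_nonpos h]; linarith [hξ.1]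
      linarith [abs_nonneg t]
  have habs : ∀ ξ ∈ Set.uIcc (0:ℝ) t, |ξ| ≤ |t| := by
    intro ξ hξ
    rcases le_total 0 t with h | h
    · rw [Set.uIcc_of_le h] at hξ; rw [abs_of_nonneg h]; exact abs_le.mpr ⟨by linarith [hξ.1], hξ.2⟩
    · rw [Set.uIcc_of_ge h] at hξ; rw [abs_of_nonpos hξ.2, abs_of_nonpos h]; linarith [hξ.1]
  have key : ‖(f t - deriv f 0 * t) - (f 0 - deriv f 0 * 0)‖ ≤ (L:ℝ) * |t| * ‖t - 0‖ := by
    apply Convex.norm_image_sub_le_of_norm_hasDerivWithin_le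
      (f := fun ξ => f ξ - deriv f 0 * ξ) (f' := fun ξ => deriv f ξ - deriv f 0)
    · intro ξ hξ
      exact (((hder ξ (hsub hξ).2).sub (((hasDerivAt_id ξ).const_mul (deriv f 0)).congr_deriv
        (by ring))).hasDerivWithinAt).congr_deriv rfl
    · intro ξ hξ
      have h1 := hlip.dist_le_mul ξ (hsub hξ).1 0 (hball (by simp [Metric.mem_ball, hε])).1
      rw [Real.dist_eq, Real.dist_eq, sub_zero] at h1
      have := habs ξ hξ
      calc ‖deriv f ξ - deriv f 0‖ ≤ (L:ℝ) * |ξ| := h1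
        _ ≤ (L:ℝ) * |t| := by nlinarith [L.coe_nonneg, abs_nonneg ξ]
    · exact convex_uIcc 0 t
    · exact Set.left_mem_uIcc
    · exact Set.right_mem_uIcc
  rw [Real.norm_eq_abs, sub_zero, Real.norm_eq_abs] at key
  have : |f t - f 0 - deriv f 0 * t| ≤ (L:ℝ) * |t| * |t| := by
    calc |f t - f 0 - deriv f 0 * t| = |(f t - deriv f 0 * t) - (f 0 - deriv f 0 * 0)| := by ring_nf
      _ ≤ (L:ℝ) * |t| * |t| := key
  have h2 : |t| * |t| = t^2 := by rw [← abs_mul, abs_mul_self]; ring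
  calc |f t - f 0 - deriv f 0 * t| ≤ (L:ℝ) * |t| * |t| := this
    _ = (L:ℝ) * t^2 := by rw [mul_assoc, h2]
    _ ≤ ((L:ℝ)+1) * t^2 := by nlinarith [sq_nonneg t]

lemma abs_sub_le_of_uIcc {s σ ξ : ℝ} (h : ξ ∈ Set.uIcc s σ) : |ξ - s| ≤ |σ - s| := by
  rcases le_total s σ with h' | h'
  · rw [Set.uIcc_of_le h'] at h
    rw [abs_of_nonneg (by linarith [h.1]), abs_of_nonneg (by linarith)]
    linarith [h.2]
  · rw [Set.uIcc_of_ge h'] at h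
    rw [abs_of_nonpos (by linarith [h.2]), abs_of_nonpos (by linarith)]
    linarith [h.1]

/-- second-order Taylor expansion with remainder bound for a C³ planar curve -/
lemma curve_taylor (x : ℝ → (Fin 2 → ℝ)) (hx : ContDiff ℝ 3 x) (s : ℝ) :
    ∃ M > (0:ℝ), ∀ σ : ℝ, |σ - s| ≤ 1 → ∀ l : Fin 2,
      |x σ l - x s l - (σ - s) * deriv x s l - (σ - s)^2/2 * deriv (deriv x) s l|
        ≤ M * |σ - s|^3 := by
  have hx' : ContDiff ℝ (2+1) x := by exact_mod_cast hx
  have hdiff : Differentiable ℝ x := hx.differentiable (by norm_num)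
  have hX1 : ContDiff ℝ 2 (deriv x) := (contDiff_succ_iff_deriv.mp hx').2.2
  have hX1' : ContDiff ℝ (1+1) (deriv x) := by exact_mod_cast hX1
  have hdiff1 : Differentiable ℝ (deriv x) := hX1.differentiable (by norm_num)
  have hX2 : ContDiff ℝ 1 (deriv (deriv x)) := (contDiff_succ_iff_deriv.mp hX1').2.2
  have hdiff2 : Differentiable ℝ (deriv (deriv x)) := hX2.differentiable (by norm_num)
  have hD1 : ∀ σ, HasDerivAt x (deriv x σ) σ := fun σ => (hdiff σ).hasDerivAt
  have hD2 : ∀ σ, HasDerivAt (deriv x) (deriv (deriv x) σ) σ := fun σ => (hdiff1 σ).hasDerivAt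
  have hD3 : ∀ σ, HasDerivAt (deriv (deriv x)) (deriv (deriv (deriv x)) σ) σ :=
    fun σ => (((contDiff_one_iff_deriv.mp hX2).1) σ).hasDerivAt
  set X1 := deriv x
  set X2 := deriv X1
  set X3 := deriv X2
  obtain ⟨M0, hM0⟩ := (isCompact_Icc (a := s - 1) (b := s + 1)).exists_bound_of_continuousOn
    ((contDiff_one_iff_deriv.mp hX2).2.continuousOn (s := Set.Icc (s-1) (s+1)))
  set M : ℝ := max M0 0 + 1 with hM
  have hMpos : 0 < M := by positivity
  have hbd : ∀ ζ ∈ Set.Icc (s-1) (s+1), ‖X3 ζ‖ ≤ M := by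
    intro ζ hζ
    calc ‖X3 ζ‖ ≤ M0 := hM0 ζ hζ
      _ ≤ M := by have := le_max_left M0 (0:ℝ); simp only [hM]; linarith
  have memK : ∀ σ : ℝ, |σ - s| ≤ 1 → σ ∈ Set.Icc (s-1) (s+1) := by
    intro σ h; rw [Set.mem_Icc]; constructor <;> [linarith [abs_le.mp h |>.1]; linarith [abs_le.mp h |>.2]]
  have step1 : ∀ ξ ∈ Set.Icc (s-1) (s+1), ‖X2 ξ - X2 s‖ ≤ M * |ξ - s| := by
    intro ξ hξ
    have := Convex.norm_image_sub_le_of_norm_hasDerivWithin_le (f := X2) (f' := X3)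
      (fun ζ hζ => (hD3 ζ).hasDerivWithinAt) hbd (convex_Icc _ _)
      (memK s (by simp)) hξ
    simpa [Real.norm_eq_abs] using this
  have step2 : ∀ σ : ℝ, |σ - s| ≤ 1 → ‖X1 σ - X1 s - (σ - s) • X2 s‖ ≤ M * |σ - s|^2 := by
    intro σ hσ
    have hsub : Set.uIcc s σ ⊆ Set.Icc (s-1) (s+1) := by
      intro ξ hξ; exact memK ξ (le_trans (abs_sub_le_of_uIcc hξ) hσ)
    have key := Convex.norm_image_sub_le_of_norm_hasDerivWithin_le
      (f := fun ξ => X1 ξ - X1 s - (ξ - s) • X2 s) (f' := fun ξ => X2 ξ - X2 s)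
      (fun ξ _ => (((hD2 ξ).sub_const (X1 s)).sub
        ((((hasDerivAt_id ξ).sub_const s).smul_const (X2 s)).congr_deriv (one_smul ℝ (X2 s)))).hasDerivWithinAt)
      (fun ξ hξ => le_trans (step1 ξ (hsub hξ))
        (mul_le_mul_of_nonneg_left (abs_sub_le_of_uIcc hξ) hMpos.le))
      (convex_uIcc s σ) Set.left_mem_uIcc Set.right_mem_uIcc
    simp only [sub_self, zero_smul, sub_zero, Real.norm_eq_abs] at key
    calc ‖X1 σ - X1 s - (σ - s) • X2 s‖ ≤ M * |σ - s| * |σ - s| := key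
      _ = M * |σ - s|^2 := by ring
  have step3 : ∀ σ : ℝ, |σ - s| ≤ 1 →
      ‖x σ - x s - (σ - s) • X1 s - ((σ - s)^2/2) • X2 s‖ ≤ M * |σ - s|^3 := by
    intro σ hσ
    have key := Convex.norm_image_sub_le_of_norm_hasDerivWithin_le
      (C := M * |σ - s|^2)
      (f := fun ξ => x ξ - x s - (ξ - s) • X1 s - ((ξ - s)^2/2) • X2 s)
      (f' := fun ξ => X1 ξ - X1 s - (ξ - s) • X2 s)
      (fun ξ _ => ((((hD1 ξ).sub_const (x s)).sub
          ((((hasDerivAt_id ξ).sub_const s).smul_const (X1 s)).congr_deriv (one_smul ℝ (X1 s)))).sub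
          ((((((hasDerivAt_id ξ).sub_const s).pow 2).div_const 2).smul_const (X2 s)).congr_deriv
            (by norm_num))).hasDerivWithinAt)
      (fun ξ hξ => by
        refine le_trans (step2 ξ (le_trans (abs_sub_le_of_uIcc hξ) hσ)) ?_
        have h2 := abs_sub_le_of_uIcc hξ
        have h3 : |ξ - s|^2 ≤ |σ - s|^2 := by nlinarith [abs_nonneg (ξ - s)]
        exact mul_le_mul_of_nonneg_left h3 hMpos.le)
      (convex_uIcc s σ) Set.left_mem_uIcc Set.right_mem_uIcc
    simp only [sub_self, zero_smul, sub_zero, Real.norm_eq_abs, ne_eq, OfNat.ofNat_ne_zero,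
      not_false_eq_true, zero_pow, zero_div] at key
    calc ‖x σ - x s - (σ - s) • X1 s - ((σ - s)^2/2) • X2 s‖ ≤ M * |σ - s|^2 * |σ - s| := key
      _ = M * |σ - s|^3 := by ring
  refine ⟨M, hMpos, fun σ hσ l => ?_⟩
  have := step3 σ hσ
  have hcomp := norm_le_pi_norm (x σ - x s - (σ - s) • X1 s - ((σ - s)^2/2) • X2 s) l
  simp only [Pi.sub_apply, Pi.smul_apply, smul_eq_mul, Real.norm_eq_abs] at hcomp
  calc |x σ l - x s l - (σ - s) * X1 s l - (σ - s)^2/2 * X2 s l|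
      ≤ ‖x σ - x s - (σ - s) • X1 s - ((σ - s)^2/2) • X2 s‖ := hcomp
    _ ≤ M * |σ - s|^3 := this

/-- rescaled kernel -/
noncomputable def PhiA (c mu κ : ℝ) (ν : Fin 2 → ℝ) (i j : Fin 2) (w : Fin 2 → ℝ) : ℝ :=
  ((c * ν i * w j + mu * w i * ν j + mu * (ν 0 * w 0 + ν 1 * w 1) * idm i j)
      * (w 0 ^ 2 + w 1 ^ 2)
    - κ * (4 * mu * (ν 0 * w 0 + ν 1 * w 1) * w i * w j)) / (w 0 ^ 2 + w 1 ^ 2) ^ 2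

/-- the kernel along the curve, rescaled -/
lemma umat_eq_phi (lam mu : ℝ) (ν : Fin 2 → ℝ) (k : ℕ) (hk : k = 1 ∨ k = 2)
    (X Y g : Fin 2 → ℝ) (h : ℝ) (hh : h ≠ 0) (hg : g 0 ^ 2 + g 1 ^ 2 ≠ 0)
    (hz : ∀ l, X l - Y l = h * g l) (i j : Fin 2) :
    Umat lam mu ν k X Y i j / nrm2 (X - Y) ^ 2
      = PhiA (if k = 1 then lam else lam + 2 * mu) mu (if k = 1 then 0 else 1) ν i j g / h := by
  have hXY : ∀ l, (X - Y) l = h * g l := fun l => by simpa [Pi.sub_apply] using hz l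
  have hn : nrm2 (X - Y) ^ 2 = (h * g 0) ^ 2 + (h * g 1) ^ 2 := by
    rw [sq_nrm2]; rw [hXY 0, hXY 1]
  have hgsq : (h * g 0) ^ 2 + (h * g 1) ^ 2 ≠ 0 := by
    intro hc
    apply hg
    have : h^2 * (g 0 ^2 + g 1 ^2) = 0 := by rw [← hc]; ring
    rcases mul_eq_zero.mp this with h1 | h1
    · exact absurd h1 (pow_ne_zero 2 hh)
    · exact absurd h1 hg
  rcases hk with hk | hk <;> subst hk
  · simp only [Umat, if_pos rfl, U1mat, PhiA, dot2, Pi.sub_apply, hXY, hz, hn, if_pos rfl, reduceIte]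
    field_simp
    ring
  · simp only [Umat, Jmat, U2mat, PhiA, dot2, Pi.sub_apply, hXY, hz, hn]
    norm_num
    field_simp
    ring

/-- value of Phi at the tangent vector -/
lemma phi_at_p (c mu κ : ℝ) (ν p : Fin 2 → ℝ) (hp : p 0 ^ 2 + p 1 ^ 2 ≠ 0)
    (hν : ν 0 * p 0 + ν 1 * p 1 = 0) (i j : Fin 2) :
    PhiA c mu κ ν i j p = (c * ν i * p j + mu * p i * ν j) / (p 0 ^ 2 + p 1 ^ 2) := by
  simp only [PhiA, hν]
  field_simp
  ring

/-- derivative at 0 of Phi along the Taylor parabola -/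
lemma hasDerivAt_psi (lam mu : ℝ) (k : ℕ) (hk : k = 1 ∨ k = 2) (ν p q : Fin 2 → ℝ)
    (hp : p 0 ^ 2 + p 1 ^ 2 ≠ 0) (hν : ν 0 * p 0 + ν 1 * p 1 = 0) (i j : Fin 2) :
    HasDerivAt (fun t => PhiA (if k = 1 then lam else lam + 2 * mu) mu
        (if k = 1 then 0 else 1) ν i j (fun l => p l + q l * t / 2))
      (Uhat lam mu ν p q k i j / (2 * nrm2 p ^ 2)
        - dot2 p q / nrm2 p ^ 4 * Utld lam mu ν p k i j) 0 := by
  set r : ℝ := (ν 1 * p 0 - ν 0 * p 1) / (p 0 ^ 2 + p 1 ^ 2) with hr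
  have hν0 : ν 0 = -(r * p 1) := by
    rw [hr]; field_simp; linear_combination p 0 * hν
  have hν1 : ν 1 = r * p 0 := by
    rw [hr]; field_simp; linear_combination p 1 * hν
  have h2 : nrm2 p ^ 2 = p 0 ^ 2 + p 1 ^ 2 := sq_nrm2 p
  have h4 : nrm2 p ^ 4 = (p 0 ^ 2 + p 1 ^ 2) ^ 2 := by rw [← h2]; ring
  have hw : ∀ l, HasDerivAt (fun t : ℝ => p l + q l * t / 2) (q l / 2) 0 := by
    intro l
    simpa using (((hasDerivAt_id (0:ℝ)).const_mul (q l)).div_const 2).const_add (p l)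
  have hdν := ((hw 0).const_mul (ν 0)).add ((hw 1).const_mul (ν 1))
  have hS := ((hw 0).pow 2).add ((hw 1).pow 2)
  have hden := hS.pow 2
  have hdz : ((fun t:ℝ => ((p 0 + q 0 * t / 2) ^ 2 + (p 1 + q 1 * t / 2) ^ 2) ^ 2) 0) ≠ 0 := by
    simpa using pow_ne_zero 2 hp
  rcases hk with rfl | rfl
  · have hlin := (((hw j).const_mul (lam * ν i)).add
      (((hw i).const_mul mu).mul_const (ν j))).add ((hdν.const_mul mu).mul_const (idm i j))
    have hnum := (hlin.mul hS).sub
      ((((hdν.const_mul (4 * mu)).mul (hw i)).mul (hw j)).const_mul (0:ℝ))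
    have hψ := hnum.div hden hdz
    simp only [PhiA, reduceIte]
    refine hψ.congr_deriv ?_
    symm
    simp only [Pi.add_apply, Pi.mul_apply, Pi.pow_apply, Pi.sub_apply, Nat.cast_ofNat, mul_zero, zero_div, add_zero, Nat.reduceSub, pow_one]
    simp only [Uhat, Utld, dot2, reduceIte, h2, h4]
    rw [hν0, hν1]
    field_simp
    ring
  · have hlin := (((hw j).const_mul ((lam + 2 * mu) * ν i)).add
      (((hw i).const_mul mu).mul_const (ν j))).add ((hdν.const_mul mu).mul_const (idm i j))
    have hnum := (hlin.mul hS).sub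
      ((((hdν.const_mul (4 * mu)).mul (hw i)).mul (hw j)).const_mul (1:ℝ))
    have hψ := hnum.div hden hdz
    simp only [PhiA, reduceIte]
    refine hψ.congr_deriv ?_
    symm
    simp only [Pi.add_apply, Pi.mul_apply, Pi.pow_apply, Pi.sub_apply, Nat.cast_ofNat, mul_zero, zero_div, add_zero, Nat.reduceSub, pow_one]
    simp only [Uhat, Utld, dot2, Nat.reduceEqDiff, reduceIte, h2, h4]
    rw [hν0, hν1]
    field_simp
    ring
set_option maxHeartbeats 1000000 in
lemma main_combo (lam mu : ℝ) (ν : Fin 2 → ℝ) (x : ℝ → (Fin 2 → ℝ))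
    (hx : ContDiff ℝ 3 x) (s : ℝ) (hx' : deriv x s ≠ 0)
    (hν : dot2 ν (deriv x s) = 0) (k : ℕ) (hk : k = 1 ∨ k = 2) (i j : Fin 2) :
    ∃ δ > (0:ℝ), ∃ C > (0:ℝ), ∀ σ : ℝ, σ ≠ s → |σ - s| < δ →
      |Umat lam mu ν k (x s) (x σ) i j / nrm2 (x s - x σ) ^ 2
          - Utld lam mu ν (deriv x s) k i j / (nrm2 (deriv x s) ^ 2 * (s - σ))
          + Uhat lam mu ν (deriv x s) (deriv (deriv x) s) k i j /
              (2 * nrm2 (deriv x s) ^ 2)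
          - dot2 (deriv x s) (deriv (deriv x) s) / nrm2 (deriv x s) ^ 4 *
              Utld lam mu ν (deriv x s) k i j|
        ≤ C * |s - σ| := by
  set p := deriv x s with hpdef
  set q := deriv (deriv x) s with hqdef
  have hνp : ν 0 * p 0 + ν 1 * p 1 = 0 := by simpa [dot2] using hν
  have hcomp : p 0 ≠ 0 ∨ p 1 ≠ 0 := by
    by_contra hcon
    push_neg at hcon
    exact hx' (funext fun l => by fin_cases l <;> simp [hcon.1, hcon.2])
  have hSp : p 0 ^ 2 + p 1 ^ 2 ≠ 0 := by rcases hcomp with h | h <;> positivity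
  obtain ⟨M, hM, hTay⟩ := curve_taylor x hx s
  -- Lipschitz constant for PhiA near p
  have hΦ : ContDiffAt ℝ 1
      (PhiA (if k = 1 then lam else lam + 2 * mu) mu (if k = 1 then (0:ℝ) else 1) ν i j) p := by
    have h1 : ContDiff ℝ 1 (fun w : Fin 2 → ℝ =>
        ((if k = 1 then lam else lam + 2 * mu) * ν i * w j + mu * w i * ν j
          + mu * (ν 0 * w 0 + ν 1 * w 1) * idm i j) * (w 0 ^ 2 + w 1 ^ 2)
        - (if k = 1 then (0:ℝ) else 1) * (4 * mu * (ν 0 * w 0 + ν 1 * w 1) * w i * w j)) := by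
      fun_prop
    have h2 : ContDiff ℝ 1 (fun w : Fin 2 → ℝ => (w 0 ^ 2 + w 1 ^ 2) ^ 2) := by fun_prop
    exact h1.contDiffAt.div h2.contDiffAt (pow_ne_zero 2 hSp)
  obtain ⟨L, tset, htset, hlip⟩ := hΦ.exists_lipschitzOnWith
  obtain ⟨ε1, hε1, hball1⟩ := Metric.mem_nhds_iff.mp htset
  have hSopen : IsOpen {w : Fin 2 → ℝ | w 0 ^ 2 + w 1 ^ 2 ≠ 0} :=
    IsOpen.preimage (by fun_prop : Continuous (fun w : Fin 2 → ℝ => w 0 ^ 2 + w 1 ^ 2))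
      isOpen_ne
  obtain ⟨ε2, hε2, hball2⟩ := Metric.mem_nhds_iff.mp (hSopen.mem_nhds hSp)
  -- quadratic bound for ψ
  have hUopen : IsOpen {t : ℝ | (p 0 + q 0 * t / 2) ^ 2 + (p 1 + q 1 * t / 2) ^ 2 ≠ 0} :=
    IsOpen.preimage
      (by fun_prop : Continuous (fun t : ℝ => (p 0 + q 0 * t / 2) ^ 2 + (p 1 + q 1 * t / 2) ^ 2))
      isOpen_ne
  have hU0 : (0:ℝ) ∈ {t : ℝ | (p 0 + q 0 * t / 2) ^ 2 + (p 1 + q 1 * t / 2) ^ 2 ≠ 0} := by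
    show (p 0 + q 0 * 0 / 2) ^ 2 + (p 1 + q 1 * 0 / 2) ^ 2 ≠ 0
    simpa using hSp
  have hψC : ContDiffOn ℝ 2
      (fun t => PhiA (if k = 1 then lam else lam + 2 * mu) mu (if k = 1 then (0:ℝ) else 1) ν i j
        (fun l => p l + q l * t / 2))
      {t : ℝ | (p 0 + q 0 * t / 2) ^ 2 + (p 1 + q 1 * t / 2) ^ 2 ≠ 0} := by
    simp only [PhiA]
    apply ContDiffOn.div
    · exact ContDiff.contDiffOn (by fun_prop (disch := norm_num))
    · exact ContDiff.contDiffOn (by fun_prop (disch := norm_num))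
    · intro t ht; exact pow_ne_zero 2 ht
  obtain ⟨Cψ, hCψ, δψ, hδψ, hquad⟩ := quad_bound hUopen hU0 hψC
  have hKd := (hasDerivAt_psi lam mu k hk ν p q hSp hνp i j).deriv
  rw [hKd] at hquad
  -- the value of ψ at 0
  have hw0 : (fun l => p l + q l * (0:ℝ) / 2) = p := by funext l; simp
  have hψ0 : PhiA (if k = 1 then lam else lam + 2 * mu) mu (if k = 1 then (0:ℝ) else 1) ν i j
      (fun l => p l + q l * (0:ℝ) / 2) = Utld lam mu ν p k i j / (p 0 ^ 2 + p 1 ^ 2) := by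
    rw [hw0, phi_at_p _ _ _ _ _ hSp hνp i j]
    simp only [Utld]
  have h2n : nrm2 p ^ 2 = p 0 ^ 2 + p 1 ^ 2 := sq_nrm2 p
  -- choose δ and C
  refine ⟨min 1 (min δψ (min ε1 ε2 / (2 * (M + ‖q‖ / 2 + 1)))),
    lt_min one_pos (lt_min hδψ (by positivity)), (L:ℝ) * M + Cψ + 1, by positivity,
    fun σ hσ hδσ => ?_⟩
  set t := σ - s with htdef
  have ht0 : t ≠ 0 := sub_ne_zero.mpr hσ
  have hsneg : s - σ = -t := by rw [htdef]; ring
  clear_value t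
  have ht1 : |t| ≤ 1 := le_trans hδσ.le (min_le_left _ _)
  have hTσ : |σ - s| ≤ 1 := by rw [← htdef]; exact ht1
  have htψ : |t| ≤ δψ := le_trans hδσ.le (le_trans (min_le_right _ _) (min_le_left _ _))
  have hc1 : (0:ℝ) < M + ‖q‖ / 2 + 1 := by positivity
  have htε : (M + ‖q‖ / 2 + 1) * |t| < min ε1 ε2 := by
    have h5 : |t| < min ε1 ε2 / (2 * (M + ‖q‖ / 2 + 1)) :=
      lt_of_lt_of_le hδσ (le_trans (min_le_right _ _) (min_le_right _ _))
    have hminpos : 0 < min ε1 ε2 := lt_min hε1 hε2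
    calc (M + ‖q‖ / 2 + 1) * |t| < (M + ‖q‖ / 2 + 1) * (min ε1 ε2 / (2 * (M + ‖q‖ / 2 + 1))) :=
          mul_lt_mul_of_pos_left h5 hc1
      _ = min ε1 ε2 / 2 := by field_simp
      _ < min ε1 ε2 := by linarith
  have hsσ : s - σ ≠ 0 := by rw [hsneg]; exact neg_ne_zero.mpr ht0
  -- the rescaled secant vector
  set g : Fin 2 → ℝ := fun l => (x σ l - x s l) / t with hgdef
  have hgw : ∀ l, |g l - (p l + q l * t / 2)| ≤ M * t ^ 2 := by
    intro l
    have h1 : g l - (p l + q l * t / 2)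
        = (x σ l - x s l - t * p l - t ^ 2 / 2 * q l) / t := by
      show (x σ l - x s l) / t - (p l + q l * t / 2) = _
      field_simp
      ring
    rw [h1, abs_div, div_le_iff₀ (abs_pos.mpr ht0)]
    have hT := hTay σ hTσ l
    rw [← htdef] at hT
    calc |x σ l - x s l - t * p l - t ^ 2 / 2 * q l| ≤ M * |t| ^ 3 := hT
      _ = M * t ^ 2 * |t| := by rw [pow_succ, sq_abs, ← mul_assoc]
  have hql : ∀ l, |q l| ≤ ‖q‖ := fun l => by
    simpa [Real.norm_eq_abs] using norm_le_pi_norm q l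
  have hwt : ∀ l, |(p l + q l * t / 2) - p l| ≤ ‖q‖ / 2 * |t| := by
    intro l
    have : (p l + q l * t / 2) - p l = q l * t / 2 := by ring
    rw [this]
    have h1 : |q l * t / 2| = |q l| * |t| / 2 := by
      rw [abs_div, abs_mul]; norm_num
    rw [h1]
    have := hql l
    nlinarith [abs_nonneg t]
  have hgp : ∀ l, |g l - p l| ≤ (M + ‖q‖ / 2 + 1) * |t| := by
    intro l
    have h1 : g l - p l = (g l - (p l + q l * t / 2)) + ((p l + q l * t / 2) - p l) := by ring
    rw [h1]
    refine le_trans (abs_add_le _ _) ?_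
    have habs2 : |t|^2 ≤ |t| := by nlinarith [abs_nonneg t]
    have e1 : M * t ^ 2 ≤ M * |t| := by
      calc M * t ^ 2 = M * |t|^2 := by rw [sq_abs]
        _ ≤ M * |t| := mul_le_mul_of_nonneg_left habs2 hM.le
    calc |g l - (p l + q l * t / 2)| + |p l + q l * t / 2 - p l|
        ≤ M * t ^ 2 + ‖q‖ / 2 * |t| := add_le_add (hgw l) (hwt l)
      _ ≤ M * |t| + ‖q‖ / 2 * |t| + |t| := by linarith [abs_nonneg t]
      _ = (M + ‖q‖ / 2 + 1) * |t| := by ring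
  -- memberships
  have hgdist : dist g p ≤ (M + ‖q‖ / 2 + 1) * |t| := by
    rw [dist_pi_le_iff (by positivity)]
    intro l
    rw [Real.dist_eq]
    exact hgp l
  have hwdist : dist (fun l => p l + q l * t / 2) p ≤ (M + ‖q‖ / 2 + 1) * |t| := by
    rw [dist_pi_le_iff (by positivity)]
    intro l
    rw [Real.dist_eq]
    calc |(p l + q l * t / 2) - p l| ≤ ‖q‖ / 2 * |t| := hwt l
      _ ≤ (M + ‖q‖ / 2 + 1) * |t| := by nlinarith [abs_nonneg t, hM.le]
  have hgtset : g ∈ tset := hball1 (Metric.mem_ball.mpr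
    (lt_of_le_of_lt hgdist (lt_of_lt_of_le htε (min_le_left _ _))))
  have hwtset : (fun l => p l + q l * t / 2) ∈ tset := hball1 (Metric.mem_ball.mpr
    (lt_of_le_of_lt hwdist (lt_of_lt_of_le htε (min_le_left _ _))))
  have hSg : g 0 ^ 2 + g 1 ^ 2 ≠ 0 := hball2 (Metric.mem_ball.mpr
    (lt_of_le_of_lt hgdist (lt_of_lt_of_le htε (min_le_right _ _))))
  -- rewrite the kernel
  have hzz : ∀ l, x s l - x σ l = (s - σ) * g l := by
    intro l
    show x s l - x σ l = (s - σ) * ((x σ l - x s l) / t)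
    rw [hsneg]
    field_simp
    ring
  have hmain1 := umat_eq_phi lam mu ν k hk (x s) (x σ) g (s - σ) hsσ hSg hzz i j
  rw [hmain1]
  have hterm2 : Utld lam mu ν p k i j / (nrm2 p ^ 2 * (s - σ))
      = PhiA (if k = 1 then lam else lam + 2 * mu) mu (if k = 1 then (0:ℝ) else 1) ν i j
          (fun l => p l + q l * (0:ℝ) / 2) / (s - σ) := by
    rw [hψ0, h2n, div_div]
  rw [hterm2]
  -- split
  have hq2 := hquad t htψ
  set Φg := PhiA (if k = 1 then lam else lam + 2 * mu) mu (if k = 1 then (0:ℝ) else 1) ν i j g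
    with hΦgdef
  set ψt := PhiA (if k = 1 then lam else lam + 2 * mu) mu (if k = 1 then (0:ℝ) else 1) ν i j
    (fun l => p l + q l * t / 2) with hψtdef
  set ψ0 := PhiA (if k = 1 then lam else lam + 2 * mu) mu (if k = 1 then (0:ℝ) else 1) ν i j
    (fun l => p l + q l * (0:ℝ) / 2) with hψ0def
  set K := Uhat lam mu ν p q k i j / (2 * nrm2 p ^ 2)
    - dot2 p q / nrm2 p ^ 4 * Utld lam mu ν p k i j with hKdef
  have hsplit : Φg / (s - σ) - ψ0 / (s - σ) + Uhat lam mu ν p q k i j / (2 * nrm2 p ^ 2)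
      - dot2 p q / nrm2 p ^ 4 * Utld lam mu ν p k i j
      = (Φg - ψt) / (s - σ) - (ψt - ψ0 - K * t) / t := by
    rw [hKdef, hsneg]
    have hnp : nrm2 p ≠ 0 := by intro h0; apply hSp; rw [← h2n, h0]; ring
    field_simp [ht0, hnp]
    ring
  rw [hsplit]
  have hb1 : |(Φg - ψt) / (s - σ)| ≤ (L:ℝ) * M * |t| := by
    rw [abs_div, hsneg, abs_neg]
    rw [div_le_iff₀ (abs_pos.mpr ht0)]
    have hd := hlip.dist_le_mul g hgtset (fun l => p l + q l * t / 2) hwtset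
    rw [Real.dist_eq] at hd
    have hdgw : dist g (fun l => p l + q l * t / 2) ≤ M * t ^ 2 := by
      rw [dist_pi_le_iff (by positivity)]
      intro l
      rw [Real.dist_eq]
      exact hgw l
    calc |Φg - ψt| ≤ (L:ℝ) * dist g (fun l => p l + q l * t / 2) := hd
      _ ≤ (L:ℝ) * (M * t ^ 2) := mul_le_mul_of_nonneg_left hdgw L.coe_nonneg
      _ = (L:ℝ) * M * (t ^ 2) := by ring
      _ = (L:ℝ) * M * (|t| * |t|) := by rw [← abs_mul, abs_mul_self]; ring
      _ = (L:ℝ) * M * |t| * |t| := by ring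
  have hb2 : |(ψt - ψ0 - K * t) / t| ≤ Cψ * |t| := by
    rw [abs_div, div_le_iff₀ (abs_pos.mpr ht0)]
    calc |ψt - ψ0 - K * t| ≤ Cψ * t ^ 2 := hq2
      _ = Cψ * |t| * |t| := by rw [mul_assoc, ← abs_mul, abs_mul_self]; ring_nf
  have habseq : |s - σ| = |t| := by rw [hsneg, abs_neg]
  calc |(Φg - ψt) / (s - σ) - (ψt - ψ0 - K * t) / t|
      ≤ |(Φg - ψt) / (s - σ)| + |(ψt - ψ0 - K * t) / t| := abs_sub _ _
    _ ≤ (L:ℝ) * M * |t| + Cψ * |t| := add_le_add hb1 hb2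
    _ ≤ ((L:ℝ) * M + Cψ + 1) * |t| := by nlinarith [abs_nonneg t]
    _ = ((L:ℝ) * M + Cψ + 1) * |s - σ| := by rw [habseq]
lemma nonvanish (x : ℝ → (Fin 2 → ℝ)) (hx : ContDiff ℝ 3 x) (s : ℝ)
    (hx' : deriv x s ≠ 0) :
    ∃ δ > (0:ℝ), ∀ σ : ℝ, σ ≠ s → |σ - s| < δ → x σ ≠ x s := by
  obtain ⟨M, hM, hTay⟩ := curve_taylor x hx s
  have hex : ∃ l, deriv x s l ≠ 0 := by
    by_contra hcon
    push_neg at hcon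
    exact hx' (funext fun l => hcon l)
  obtain ⟨l0, hl0⟩ := hex
  have hpl0 : 0 < |deriv x s l0| := abs_pos.mpr hl0
  have hD : (0:ℝ) < |deriv (deriv x) s l0| / 2 + M + 1 := by positivity
  refine ⟨min 1 (|deriv x s l0| / (|deriv (deriv x) s l0| / 2 + M + 1)),
    lt_min one_pos (div_pos hpl0 hD), fun σ hσ hδ hcon => ?_⟩
  have ht0 : σ - s ≠ 0 := sub_ne_zero.mpr hσ
  have ha : 0 < |σ - s| := abs_pos.mpr ht0
  have ht1 : |σ - s| ≤ 1 := le_trans hδ.le (min_le_left _ _)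
  have h2 : |σ - s| < |deriv x s l0| / (|deriv (deriv x) s l0| / 2 + M + 1) :=
    lt_of_lt_of_le hδ (min_le_right _ _)
  have h6 : |σ - s| * (|deriv (deriv x) s l0| / 2 + M + 1) < |deriv x s l0| :=
    (lt_div_iff₀ hD).mp h2
  have h3 := hTay σ ht1 l0
  rw [hcon] at h3
  have h4 : |(σ - s) * deriv x s l0 + (σ - s)^2/2 * deriv (deriv x) s l0| ≤ M * |σ - s|^3 := by
    have he : x s l0 - x s l0 - (σ - s) * deriv x s l0 - (σ - s)^2/2 * deriv (deriv x) s l0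
        = -((σ - s) * deriv x s l0 + (σ - s)^2/2 * deriv (deriv x) s l0) := by ring
    rwa [he, abs_neg] at h3
  have h5 : |(σ - s) * deriv x s l0| - |(σ - s)^2/2 * deriv (deriv x) s l0|
      ≤ |(σ - s) * deriv x s l0 + (σ - s)^2/2 * deriv (deriv x) s l0| := by
    have := abs_add_le ((σ - s) * deriv x s l0 + (σ - s)^2/2 * deriv (deriv x) s l0)
      (-((σ - s)^2/2 * deriv (deriv x) s l0))
    simp only [add_neg_cancel_right, abs_neg] at this
    linarith
  have e1 : |(σ - s) * deriv x s l0| = |σ - s| * |deriv x s l0| := abs_mul _ _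
  have e2 : |(σ - s)^2/2 * deriv (deriv x) s l0| = |σ - s|^2/2 * |deriv (deriv x) s l0| := by
    rw [abs_mul, abs_div, abs_pow, sq_abs]
    norm_num
  have e3 : |σ - s|^3 ≤ |σ - s|^2 := by nlinarith [abs_nonneg (σ - s)]
  have e4 : |σ - s|^2 = |σ - s| * |σ - s| := sq (|σ - s|) ▸ (by ring)
  nlinarith [mul_lt_mul_of_pos_left h6 ha, sq_nonneg (σ - s), abs_nonneg (σ - s),
    mul_le_mul_of_nonneg_left e3 hM.le]

/-- Expansion of the singular kernels U_k(x(s),x(σ))/|x(s)−x(σ)|² along a smooth curve: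
U_k(x(s),x(σ))/|x(s)−x(σ)|² = Ũ_k/(|x'(s)|²(s−σ)) − Û_k/(2|x'(s)|²)
  + ((x'(s)·x''(s))/|x'(s)|⁴) Ũ_k + O(s−σ). -/
theorem Umat_kernel_expansion (lam mu : ℝ) (ν : Fin 2 → ℝ) (x : ℝ → (Fin 2 → ℝ))
    (hx : ContDiff ℝ 3 x) (s : ℝ) (hx' : deriv x s ≠ 0)
    (hν : dot2 ν (deriv x s) = 0) :
    ∃ δ > (0 : ℝ), (∀ σ : ℝ, σ ≠ s → |σ - s| < δ → x σ ≠ x s) ∧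
      ∃ C > (0 : ℝ), ∀ k ∈ ({1, 2} : Finset ℕ), ∀ σ : ℝ, σ ≠ s → |σ - s| < δ →
        ∀ i j : Fin 2,
          |Umat lam mu ν k (x s) (x σ) i j / nrm2 (x s - x σ) ^ 2
              - Utld lam mu ν (deriv x s) k i j / (nrm2 (deriv x s) ^ 2 * (s - σ))
              + Uhat lam mu ν (deriv x s) (deriv (deriv x) s) k i j /
                  (2 * nrm2 (deriv x s) ^ 2)
              - dot2 (deriv x s) (deriv (deriv x) s) / nrm2 (deriv x s) ^ 4 *
                  Utld lam mu ν (deriv x s) k i j|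
            ≤ C * |s - σ| := by
  obtain ⟨δ0, hδ0, hnv⟩ := nonvanish x hx s hx'
  have H : ∀ γ : Fin 2 × Fin 2 × Fin 2, ∃ δ > (0:ℝ), ∃ C > (0:ℝ),
      ∀ σ : ℝ, σ ≠ s → |σ - s| < δ →
      |Umat lam mu ν (if γ.1 = 0 then 1 else 2) (x s) (x σ) γ.2.1 γ.2.2 / nrm2 (x s - x σ) ^ 2
          - Utld lam mu ν (deriv x s) (if γ.1 = 0 then 1 else 2) γ.2.1 γ.2.2 /
              (nrm2 (deriv x s) ^ 2 * (s - σ))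
          + Uhat lam mu ν (deriv x s) (deriv (deriv x) s) (if γ.1 = 0 then 1 else 2) γ.2.1 γ.2.2 /
              (2 * nrm2 (deriv x s) ^ 2)
          - dot2 (deriv x s) (deriv (deriv x) s) / nrm2 (deriv x s) ^ 4 *
              Utld lam mu ν (deriv x s) (if γ.1 = 0 then 1 else 2) γ.2.1 γ.2.2|
        ≤ C * |s - σ| := by
    intro γ
    exact main_combo lam mu ν x hx s hx' hν (if γ.1 = 0 then 1 else 2)
      (by split <;> simp) γ.2.1 γ.2.2
  choose δf hδf Cf hCf hb using H
  set δ := min δ0 (Finset.univ.inf' Finset.univ_nonempty δf) with hδdef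
  set C := Finset.univ.sup' Finset.univ_nonempty Cf with hCdef
  have hδpos : 0 < δ := by
    rw [hδdef]
    apply lt_min hδ0
    rw [Finset.lt_inf'_iff]
    intro γ _
    exact hδf γ
  have hCpos : 0 < C := by
    rw [hCdef]
    exact lt_of_lt_of_le (hCf ⟨0, 0, 0⟩) (Finset.le_sup' Cf (Finset.mem_univ _))
  refine ⟨δ, hδpos, fun σ hσ hd => hnv σ hσ (lt_of_lt_of_le hd (min_le_left _ _)), C, hCpos,
    fun k hk σ hσ hd i j => ?_⟩
  have hdle : ∀ γ : Fin 2 × Fin 2 × Fin 2, |σ - s| < δf γ := by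
    intro γ
    refine lt_of_lt_of_le hd (le_trans (min_le_right _ _) ?_)
    exact Finset.inf'_le δf (Finset.mem_univ γ)
  have hCle : ∀ γ : Fin 2 × Fin 2 × Fin 2, Cf γ * |s - σ| ≤ C * |s - σ| :=
    fun γ => mul_le_mul_of_nonneg_right (Finset.le_sup' Cf (Finset.mem_univ γ)) (abs_nonneg _)
  rcases Finset.mem_insert.mp hk with rfl | hk2
  · have := hb ⟨0, i, j⟩ σ hσ (hdle ⟨0, i, j⟩)
    simp only [reduceIte] at this
    exact le_trans this (hCle ⟨0, i, j⟩)
  · have hk2' : k = 2 := Finset.mem_singleton.mp hk2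
    subst hk2'
    have := hb ⟨1, i, j⟩ σ hσ (hdle ⟨1, i, j⟩)
    simp only [show ((1:Fin 2) = 0) = False from by simp, if_false] at this
    exact le_trans this (hCle ⟨1, i, j⟩)
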